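/- A problem f :⊆ ℕ^ℕ ⇉ ℕ^ℕ is effectively discontinuous if and only if Player I has a winning strategy in the Wadge game of f. -/
import Mathlib


noncomputable section

/-- Baire space `ℕ^ℕ`. -/
abbrev Baire : Type := ℕ → ℕ

/-- The Cantor pairing `⟨n,k⟩ = (n+k)(n+k+1)/2 + k`. -/
def cpair (n k : ℕ) : ℕ := (n + k) * (n + k + 1) / 2 + k

/-- The inverse of the Cantor pairing. -/
noncomputable def cunpair (m : ℕ) : ℕ × ℕ :=
  Classical.epsilon fun x : ℕ × ℕ => cpair x.1 x.2 = m

/-- A fixed bijective numbering `w : ℕ → List ℕ` of finite words. -/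
def word (n : ℕ) : List ℕ := Denumerable.ofNat (List ℕ) n

/-- `l` is a finite prefix of the infinite sequence `p`. -/
def IsPrefixOf (l : List ℕ) (p : Baire) : Prop := l = (List.range l.length).map p

/-- Two words are comparable in the prefix order. -/
def WordComparable (u v : List ℕ) : Prop := u <+: v ∨ v <+: u

/-- The word `w(n_i)` decoded from the `i`-th entry of the code `q`. -/
noncomputable def wn (q : Baire) (i : ℕ) : List ℕ := word (cunpair (q i)).1

/-- The word `w(k_i)` decoded from the `i`-th entry of the code `q`. -/
noncomputable def wk (q : Baire) (i : ℕ) : List ℕ := word (cunpair (q i)).2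

/-- The code `q` is consistent. -/
def ConsistentCode (q : Baire) : Prop :=
  ∀ i j, WordComparable (wn q i) (wn q j) → WordComparable (wk q i) (wk q j)

/-- The continuous partial function `Φ_q :⊆ ℕ^ℕ → ℕ^ℕ` coded by `q`. -/
noncomputable def Phi (q : Baire) : Baire →. Baire := fun p =>
  ⟨ConsistentCode q ∧ ∀ m : ℕ, ∃ i, IsPrefixOf (wn q i) p ∧ m < (wk q i).length,
   fun _ => Classical.epsilon fun x : Baire =>
      ∀ i, IsPrefixOf (wn q i) p → IsPrefixOf (wk q i) x⟩

/-- The pairing `⟨q,p⟩` on Baire space. -/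
def bpair (q p : Baire) : Baire := fun n => if n % 2 = 0 then q (n / 2) else p (n / 2)

/-- Even part of a sequence. -/
def evens (r : Baire) : Baire := fun n => r (2 * n)

/-- Odd part of a sequence. -/
def odds (r : Baire) : Baire := fun n => r (2 * n + 1)

/-- The universal function `U(⟨q,p⟩) = Φ_q(p)`. -/
noncomputable def U : Baire →. Baire := fun r => Phi (evens r) (odds r)

/-- `h` is monotone for the prefix order. -/
def MonotoneWord (h : List ℕ → List ℕ) : Prop := ∀ u v, u <+: v → h u <+: h v

/-- `h` approximates the partial function `F`. -/
def Approximates (h : List ℕ → List ℕ) (F : Baire →. Baire) : Prop :=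
  ∀ p, ∀ hp : (F p).Dom,
    (∀ v, IsPrefixOf v p → IsPrefixOf (h v) ((F p).get hp)) ∧
    (∀ m : ℕ, ∃ v, IsPrefixOf v p ∧ m < (h v).length)

/-- `F :⊆ ℕ^ℕ → ℕ^ℕ` is continuous: some monotone word function approximates it. -/
def ContinuousPF (F : Baire →. Baire) : Prop := ∃ h, MonotoneWord h ∧ Approximates h F

/-- `F :⊆ ℕ^ℕ → ℕ^ℕ` is computable: some computable monotone word function approximates it. -/
def ComputablePF (F : Baire →. Baire) : Prop :=
  ∃ h, Computable h ∧ MonotoneWord h ∧ Approximates h F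

/-- A total function is computable iff it is computable as a partial function with full domain. -/
def ComputableTotal (F : Baire → Baire) : Prop := ComputablePF fun p => Part.some (F p)

/-- A problem (multivalued function on Baire space). -/
abbrev Problem : Type := Baire → Set Baire

/-- `F` is a realizer of the problem `f`. -/
def Realizes (F : Baire →. Baire) (f : Problem) : Prop :=
  ∀ p, (f p).Nonempty → ∃ h : (F p).Dom, (F p).get h ∈ f p

/-- `f` is continuous: it has a continuous realizer. -/
def ContinuousProblem (f : Problem) : Prop := ∃ F, ContinuousPF F ∧ Realizes F f

/-- The discontinuity problem `DIS`. -/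
noncomputable def DIS : Problem := fun p => {q | q ∉ U p}

/-- `D` is a discontinuity function for `f`. -/
def DiscontinuityFunction (D : Baire → Baire) (f : Problem) : Prop :=
  ∀ q, (f (D q)).Nonempty ∧ ∀ y ∈ Phi q (D q), y ∉ f (D q)

/-- `f` is computably discontinuous. -/
def ComputablyDiscontinuous (f : Problem) : Prop :=
  ∃ D, ComputableTotal D ∧ DiscontinuityFunction D f

/-- `f` is effectively discontinuous. -/
def EffectivelyDiscontinuous (f : Problem) : Prop :=
  ∃ D : Baire → Baire, Continuous D ∧ DiscontinuityFunction D f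

/-- Weihrauch reducibility `f ≤_W g`. -/
def WeihrauchRed (f g : Problem) : Prop :=
  ∃ H K : Baire →. Baire, ComputablePF H ∧ ComputablePF K ∧
    ∀ G : Baire →. Baire, Realizes G g →
      Realizes (fun p => (K p).bind fun s => (G s).bind fun t => H (bpair p t)) f

/-- Strong Weihrauch reducibility `f ≤_sW g`. -/
def StrongWeihrauchRed (f g : Problem) : Prop :=
  ∃ H K : Baire →. Baire, ComputablePF H ∧ ComputablePF K ∧
    ∀ G : Baire →. Baire, Realizes G g →
      Realizes (fun p => (K p).bind fun s => (G s).bind fun t => H t) f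

/-- Continuous Weihrauch reducibility `f ≤*_W g`. -/
def ContWeihrauchRed (f g : Problem) : Prop :=
  ∃ H K : Baire →. Baire, ContinuousPF H ∧ ContinuousPF K ∧
    ∀ G : Baire →. Baire, Realizes G g →
      Realizes (fun p => (K p).bind fun s => (G s).bind fun t => H (bpair p t)) f

/-- Continuous strong Weihrauch reducibility `f ≤*_sW g`. -/
def ContStrongWeihrauchRed (f g : Problem) : Prop :=
  ∃ H K : Baire →. Baire, ContinuousPF H ∧ ContinuousPF K ∧
    ∀ G : Baire →. Baire, Realizes G g →
      Realizes (fun p => (K p).bind fun s => (G s).bind fun t => H t) f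

/-- Concatenation of the first `n` moves. -/
def concatN (ms : ℕ → List ℕ) (n : ℕ) : List ℕ := ((List.range n).map ms).flatten

/-- The concatenated play is infinite. -/
def PlayInf (ms : ℕ → List ℕ) : Prop := ∀ m : ℕ, ∃ n, m < (concatN ms n).length

/-- The infinite sequence determined by an infinite play. -/
noncomputable def playLim (ms : ℕ → List ℕ) : Baire :=
  Classical.epsilon fun p : Baire => ∀ n, IsPrefixOf (concatN ms n) p

/-- Player II wins the run of the Wadge game of `f` given by the moves `xs` of I and `ys` of II. -/
def WadgeIIWins (f : Problem) (xs ys : ℕ → List ℕ) : Prop :=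
  (PlayInf xs ∧ (f (playLim xs)).Nonempty) → (PlayInf ys ∧ playLim ys ∈ f (playLim xs))

/-- The list of first `n` moves. -/
def histW (xs : ℕ → List ℕ) (n : ℕ) : List (List ℕ) := (List.range n).map xs

/-- `σ` is a winning strategy for Player II in the Wadge game of `f`. -/
def WadgeWinningII (f : Problem) (σ : List (List ℕ) → List ℕ) : Prop :=
  ∀ xs : ℕ → List ℕ, WadgeIIWins f xs fun i => σ (histW xs (i + 1))

/-- `σ` is a winning strategy for Player I in the Wadge game of `f`. -/
def WadgeWinningI (f : Problem) (σ : List (List ℕ) → List ℕ) : Prop :=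
  ∀ ys : ℕ → List ℕ, ¬ WadgeIIWins f (fun i => σ (histW ys i)) ys

/-- The list of first `n` values of a sequence. -/
def histN (x : Baire) (n : ℕ) : List ℕ := (List.range n).map x

/-- Player II wins the run `(x,y)` of the Lipschitz game of `f`. -/
def LipIIWins (f : Problem) (x y : Baire) : Prop := (f x).Nonempty → y ∈ f x

/-- `σ` is a winning strategy for Player II in the Lipschitz game of `f`. -/
def LipWinningII (f : Problem) (σ : List ℕ → ℕ) : Prop :=
  ∀ x : Baire, LipIIWins f x fun i => σ (histN x (i + 1))

/-- `σ` is a winning strategy for Player I in the Lipschitz game of `f`. -/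
def LipWinningI (f : Problem) (σ : List ℕ → ℕ) : Prop :=
  ∀ y : Baire, ¬ LipIIWins f (fun i => σ (histN y i)) y

/-- `σ` is a winning strategy for Player II in the Gale–Stewart game `A`. -/
def GSWinningII (A : Set Baire) (σ : List ℕ → ℕ) : Prop :=
  ∀ x : Baire, bpair x (fun i => σ (histN x (i + 1))) ∈ A

/-- `σ` is a winning strategy for Player I in the Gale–Stewart game `A`. -/
def GSWinningI (A : Set Baire) (σ : List ℕ → ℕ) : Prop :=
  ∀ y : Baire, bpair (fun i => σ (histN y i)) y ∉ A

/-- The totalization `Tf` of `f`. -/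
def Totalization (f : Problem) : Problem := fun p => {q | (f p).Nonempty → q ∈ f p}

/-- The paired graph `⟨graph(Tf)⟩ ⊆ ℕ^ℕ`. -/
def pairedGraph (f : Problem) : Set Baire :=
  {r | ∃ x y : Baire, r = bpair x y ∧ y ∈ Totalization f x}

/-- Domain of the word concatenation map `w*`. -/
def wstarDom (p : Baire) : Prop := PlayInf fun i => word (p i)

/-- The word concatenation map `w* : p ↦ w(p 0) w(p 1) ⋯` (on its domain). -/
noncomputable def wstar (p : Baire) : Baire := playLim fun i => word (p i)

/-- The problem `f^w = w*⁻¹ ∘ f ∘ w*`. -/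
noncomputable def wordLift (f : Problem) : Problem := fun p =>
  {q | wstarDom p ∧ (f (wstar p)).Nonempty ∧ wstarDom q ∧ wstar q ∈ f (wstar p)}

/-- The `i`-th component of a tupled sequence. -/
def tupleComp (p : Baire) (i : ℕ) : Baire := fun n => p (cpair i n)

/-- The parallelization `⟨f⟩` of `f`. -/
def Parallelization (f : Problem) : Problem := fun p =>
  {q | ∀ i, tupleComp q i ∈ f (tupleComp p i)}

/-- Turing reducibility: `p` is computable relative to the oracle `q`. -/
def TuringLe (p q : Baire) : Prop := ∃ F : Baire →. Baire, ComputablePF F ∧ p ∈ F q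

end
noncomputable section Aux

open List

/-! ### Cantor pairing -/

lemma cpair_two_mul (n k : ℕ) : 2 * cpair n k = (n + k) * (n + k + 1) + 2 * k := by
  have h : 2 * ((n + k) * (n + k + 1) / 2) = (n + k) * (n + k + 1) :=
    Nat.two_mul_div_two_of_even (Nat.even_mul_succ_self _)
  unfold cpair; omega

lemma cpair_inj {a b c d : ℕ} (h : cpair a b = cpair c d) : a = c ∧ b = d := by
  have h2 : (a + b) * (a + b + 1) + 2 * b = (c + d) * (c + d + 1) + 2 * d := by
    have := cpair_two_mul a b; have := cpair_two_mul c d; omega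
  have hst : a + b = c + d := by
    by_contra hne
    rcases Nat.lt_or_ge (a + b) (c + d) with hlt | hge
    · have : (a + b) * (a + b + 1) + 2 * b < (c + d) * (c + d + 1) := by
        calc (a + b) * (a + b + 1) + 2 * b ≤ (a + b) * (a + b + 1) + 2 * (a + b) := by omega
        _ < (a + b + 1) * (a + b + 2) := by nlinarith
        _ ≤ (c + d) * (c + d + 1) := Nat.mul_le_mul (by omega) (by omega)
      omega
    · have hlt : c + d < a + b := by omega
      have : (c + d) * (c + d + 1) + 2 * d < (a + b) * (a + b + 1) := by
        calc (c + d) * (c + d + 1) + 2 * d ≤ (c + d) * (c + d + 1) + 2 * (c + d) := by omega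
        _ < (c + d + 1) * (c + d + 2) := by nlinarith
        _ ≤ (a + b) * (a + b + 1) := Nat.mul_le_mul (by omega) (by omega)
      omega
  rw [hst] at h2
  constructor <;> omega

lemma cunpair_cpair (n k : ℕ) : cunpair (cpair n k) = (n, k) := by
  have hs : cpair (cunpair (cpair n k)).1 (cunpair (cpair n k)).2 = cpair n k :=
    Classical.epsilon_spec (p := fun x : ℕ × ℕ => cpair x.1 x.2 = cpair n k) ⟨(n, k), rfl⟩
  have := cpair_inj hs
  exact Prod.ext this.1 this.2

lemma wn_eq {q : Baire} {i : ℕ} {u v : List ℕ}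
    (h : q i = cpair (Encodable.encode u) (Encodable.encode v)) : wn q i = u := by
  simp [wn, h, cunpair_cpair, word, Denumerable.ofNat_encode]

lemma wk_eq {q : Baire} {i : ℕ} {u v : List ℕ}
    (h : q i = cpair (Encodable.encode u) (Encodable.encode v)) : wk q i = v := by
  simp [wk, h, cunpair_cpair, word, Denumerable.ofNat_encode]

/-! ### IsPrefixOf and histN -/

@[simp] lemma histN_length (p : Baire) (n : ℕ) : (histN p n).length = n := by
  simp [histN]

lemma histN_getElem (p : Baire) {n i : ℕ} (h : i < n) :
    (histN p n)[i]'(by simpa using h) = p i := by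
  simp [histN]

lemma histN_succ (p : Baire) (n : ℕ) : histN p (n + 1) = histN p n ++ [p n] := by
  simp [histN, List.range_succ]

lemma isPrefixOf_iff {l : List ℕ} {p : Baire} :
    IsPrefixOf l p ↔ ∀ i (h : i < l.length), l[i] = p i := by
  constructor
  · intro h i hi
    rw [List.getElem_of_eq h hi]
    simp
  · intro h
    apply List.ext_getElem (by simp)
    intro i h1 h2
    simpa using h i h1

lemma isPrefixOf_histN (p : Baire) (n : ℕ) : IsPrefixOf (histN p n) p := by
  rw [isPrefixOf_iff]
  intro i hi
  exact histN_getElem p (by simpa using hi)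

lemma IsPrefixOf.eq_histN {l : List ℕ} {p : Baire} (h : IsPrefixOf l p) :
    l = histN p l.length := h

@[simp] lemma isPrefixOf_nil (p : Baire) : IsPrefixOf [] p := rfl

lemma histN_prefix {p : Baire} {n m : ℕ} (h : n ≤ m) : histN p n <+: histN p m := by
  rw [List.prefix_iff_eq_take]
  simp [histN, ← List.map_take, List.take_range, Nat.min_eq_left h]

lemma IsPrefixOf.mono {l l' : List ℕ} {p : Baire} (h : l <+: l') (h' : IsPrefixOf l' p) :
    IsPrefixOf l p := by
  rw [isPrefixOf_iff] at h' ⊢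
  intro i hi
  rw [h.getElem hi]
  exact h' i (lt_of_lt_of_le hi h.length_le)

lemma isPrefixOf_prefix {l l' : List ℕ} {p : Baire} (h : IsPrefixOf l p)
    (h' : IsPrefixOf l' p) (hle : l.length ≤ l'.length) : l <+: l' := by
  rw [h.eq_histN, h'.eq_histN]
  exact histN_prefix hle

lemma IsPrefixOf.apply_eq {l : List ℕ} {p : Baire} (h : IsPrefixOf l p) {i : ℕ}
    (hi : i < l.length) : p i = l[i] := (isPrefixOf_iff.1 h i hi).symm

lemma eq_of_unbounded_common_prefix {p p' : Baire}
    (h : ∀ m, ∃ l : List ℕ, IsPrefixOf l p ∧ IsPrefixOf l p' ∧ m < l.length) : p = p' := by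
  funext m
  obtain ⟨l, h1, h2, h3⟩ := h m
  rw [h1.apply_eq h3, h2.apply_eq h3]

/-! ### concatN and playLim -/

@[simp] lemma concatN_zero (ms : ℕ → List ℕ) : concatN ms 0 = [] := rfl

lemma concatN_succ (ms : ℕ → List ℕ) (n : ℕ) :
    concatN ms (n + 1) = concatN ms n ++ ms n := by
  simp [concatN, List.range_succ]

lemma concatN_prefix (ms : ℕ → List ℕ) {n m : ℕ} (h : n ≤ m) :
    concatN ms n <+: concatN ms m := by
  induction m with
  | zero =>
    have : n = 0 := by omega
    subst this; exact List.prefix_refl _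
  | succ m ih =>
    rcases Nat.lt_or_ge n (m + 1) with h' | h'
    · exact (ih (by omega)).trans (by rw [concatN_succ]; exact List.prefix_append _ _)
    · have : n = m + 1 := by omega
      subst this; exact List.prefix_refl _

lemma concatN_congr {ms ms' : ℕ → List ℕ} {n : ℕ} (h : ∀ i < n, ms i = ms' i) :
    concatN ms n = concatN ms' n := by
  unfold concatN
  congr 1
  apply List.map_congr_left
  intro i hi
  exact h i (by simpa using hi)

lemma exists_limit (ms : ℕ → List ℕ) : ∃ p : Baire, ∀ n, IsPrefixOf (concatN ms n) p := by
  classical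
  refine ⟨fun m => if h : ∃ n, m < (concatN ms n).length then
    (concatN ms (Nat.find h))[m]'(Nat.find_spec h) else 0, fun n => ?_⟩
  rw [isPrefixOf_iff]
  intro i hi
  have hex : ∃ n', i < (concatN ms n').length := ⟨n, hi⟩
  rw [dif_pos hex]
  rcases Nat.le_total n (Nat.find hex) with hle | hle
  · exact (concatN_prefix ms hle).getElem hi
  · exact ((concatN_prefix ms hle).getElem (Nat.find_spec hex)).symm

lemma playLim_spec (ms : ℕ → List ℕ) (n : ℕ) : IsPrefixOf (concatN ms n) (playLim ms) :=
  Classical.epsilon_spec (exists_limit ms) n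

lemma playLim_unique {ms : ℕ → List ℕ} {p : Baire} (hinf : PlayInf ms)
    (h : ∀ n, IsPrefixOf (concatN ms n) p) : playLim ms = p := by
  apply eq_of_unbounded_common_prefix
  intro m
  obtain ⟨n, hn⟩ := hinf m
  exact ⟨concatN ms n, playLim_spec ms n, h n, hn⟩

end Aux
noncomputable section Aux2

open List

/-! ### Phi -/

lemma Phi_dom_iff {q x : Baire} :
    (Phi q x).Dom ↔ ConsistentCode q ∧
      ∀ m : ℕ, ∃ i, IsPrefixOf (wn q i) x ∧ m < (wk q i).length := Iff.rfl

lemma Phi_get_eq {q x : Baire} (hdom : (Phi q x).Dom) {y : Baire}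
    (hy : ∀ i, IsPrefixOf (wn q i) x → IsPrefixOf (wk q i) y) :
    (Phi q x).get hdom = y := by
  have hz : ∀ i, IsPrefixOf (wn q i) x →
      IsPrefixOf (wk q i) (Classical.epsilon fun z : Baire =>
        ∀ i, IsPrefixOf (wn q i) x → IsPrefixOf (wk q i) z) :=
    Classical.epsilon_spec (p := fun z : Baire =>
      ∀ i, IsPrefixOf (wn q i) x → IsPrefixOf (wk q i) z) ⟨y, hy⟩
  show Classical.epsilon _ = y
  apply eq_of_unbounded_common_prefix
  intro m
  obtain ⟨i, hi1, hi2⟩ := hdom.2 m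
  exact ⟨wk q i, hz i hi1, hy i hi1, hi2⟩

lemma mem_Phi {q x y : Baire} (hdom : (Phi q x).Dom)
    (hy : ∀ i, IsPrefixOf (wn q i) x → IsPrefixOf (wk q i) y) : y ∈ Phi q x :=
  Part.mem_mk_iff.2 ⟨hdom, Phi_get_eq hdom hy⟩

lemma Phi_mem_elim {q x y : Baire} (h : y ∈ Phi q x) :
    ∃ hdom : (Phi q x).Dom, (Phi q x).get hdom = y := Part.mem_mk_iff.1 h

/-! ### Continuity on Baire space -/

lemma isOpen_agree (q : Baire) (N : ℕ) : IsOpen {q' : Baire | ∀ i < N, q' i = q i} := by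
  induction N with
  | zero => simpa using isOpen_univ
  | succ N ih =>
    have : {q' : Baire | ∀ i < N + 1, q' i = q i}
        = {q' : Baire | ∀ i < N, q' i = q i} ∩ {q' : Baire | q' N = q N} := by
      ext q'; simp only [Set.mem_inter_iff, Set.mem_setOf_eq]
      constructor
      · exact fun h => ⟨fun i hi => h i (by omega), h N (by omega)⟩
      · rintro ⟨h1, h2⟩ i hi
        rcases Nat.lt_or_ge i N with h | h
        · exact h1 i h
        · have : i = N := by omega
          subst this; exact h2
    rw [this]
    refine ih.inter ?_
    have : {q' : Baire | q' N = q N} = (fun p : Baire => p N) ⁻¹' ({q N} : Set ℕ) := rfl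
    rw [this]
    exact (continuous_apply N).isOpen_preimage _ (isOpen_discrete _)

lemma continuous_modulus {D : Baire → Baire} (hD : Continuous D) (q : Baire) (m : ℕ) :
    ∃ N, ∀ q', (∀ i < N, q' i = q i) → ∀ j < m, D q' j = D q j := by
  have hopen : IsOpen (D ⁻¹' {p : Baire | ∀ j < m, p j = D q j}) :=
    (isOpen_agree (D q) m).preimage hD
  have hq : q ∈ D ⁻¹' {p : Baire | ∀ j < m, p j = D q j} := fun j _ => rfl
  obtain ⟨I, u, hIu, hsub⟩ := isOpen_pi_iff.1 hopen q hq
  refine ⟨(I.sup id) + 1, fun q' hq' => ?_⟩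
  apply hsub
  intro i hi
  have : q' i = q i := hq' i (Nat.lt_succ_of_le (Finset.le_sup (f := id) hi))
  rw [this]
  exact (hIu i hi).2

lemma continuous_of_locally_determined {D : Baire → Baire}
    (h : ∀ q m, ∃ N, ∀ q', (∀ i < N, q' i = q i) → D q' m = D q m) : Continuous D := by
  apply continuous_pi
  intro m
  rw [continuous_iff_continuousAt]
  intro q
  obtain ⟨N, hN⟩ := h q m
  have hmem : {q' : Baire | ∀ i < N, q' i = q i} ∈ nhds q :=
    (isOpen_agree q N).mem_nhds (fun i _ => rfl)
  have hev : ∀ᶠ q' in nhds q, D q' m = D q m := Filter.eventually_of_mem hmem hN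
  unfold ContinuousAt
  rw [show nhds (D q m) = pure (D q m) from congrFun (nhds_discrete ℕ) _, Filter.tendsto_pure]
  exact hev

end Aux2
noncomputable section Aux3

open List Classical in
/-! ### From effective discontinuity to a strategy for Player I -/

/-- The extension of a finite word by zeros. -/
def extB (s : List ℕ) : Baire := fun i => s.getD i 0

/-- Outputs of `D` up to `m` are stable on the cylinder of `s`. -/
def StableD (D : Baire → Baire) (s : List ℕ) (m : ℕ) : Prop :=
  ∀ q', IsPrefixOf s q' → ∀ j < m, D q' j = D (extB s) j

open Classical in
/-- The number of output values of `D` decided by `s`. -/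
noncomputable def muD (D : Baire → Baire) (s : List ℕ) : ℕ :=
  Nat.findGreatest (StableD D s) s.length

/-- The decided part of the output of `D` on the cylinder of `s`. -/
noncomputable def deltaD (D : Baire → Baire) (s : List ℕ) : List ℕ :=
  histN (D (extB s)) (muD D s)

lemma isPrefixOf_extB (s : List ℕ) : IsPrefixOf s (extB s) := by
  rw [isPrefixOf_iff]
  intro i hi
  exact (List.getD_eq_getElem s 0 hi).symm

lemma stableD_zero (D : Baire → Baire) (s : List ℕ) : StableD D s 0 :=
  fun _ _ j hj => absurd hj (by omega)

lemma muD_spec (D : Baire → Baire) (s : List ℕ) : StableD D s (muD D s) := by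
  classical
  exact Nat.findGreatest_spec (Nat.zero_le _) (stableD_zero D s)

lemma muD_ge {D : Baire → Baire} {s : List ℕ} {m : ℕ} (h1 : m ≤ s.length)
    (h2 : StableD D s m) : m ≤ muD D s := by
  classical
  exact Nat.le_findGreatest h1 h2

@[simp] lemma deltaD_length (D : Baire → Baire) (s : List ℕ) :
    (deltaD D s).length = muD D s := by simp [deltaD]

lemma deltaD_isPrefixOf {D : Baire → Baire} {s : List ℕ} {q' : Baire}
    (h : IsPrefixOf s q') : IsPrefixOf (deltaD D s) (D q') := by
  rw [isPrefixOf_iff]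
  intro j hj
  have hj' : j < muD D s := by simpa using hj
  rw [show (deltaD D s)[j] = D (extB s) j from histN_getElem _ hj']
  exact (muD_spec D s q' h j hj').symm

lemma stableD_mono {D : Baire → Baire} {s s' : List ℕ} {m : ℕ} (h : s <+: s')
    (hst : StableD D s m) : StableD D s' m := by
  intro q' hq' j hj
  have h1 : IsPrefixOf s q' := IsPrefixOf.mono h hq'
  have h2 : IsPrefixOf s (extB s') := IsPrefixOf.mono h (isPrefixOf_extB s')
  rw [hst q' h1 j hj, hst (extB s') h2 j hj]

lemma muD_mono {D : Baire → Baire} {s s' : List ℕ} (h : s <+: s') :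
    muD D s ≤ muD D s' := by
  classical
  exact muD_ge (le_trans (Nat.findGreatest_le _) h.length_le) (stableD_mono h (muD_spec D s))

lemma deltaD_mono {D : Baire → Baire} {s s' : List ℕ} (h : s <+: s') :
    deltaD D s <+: deltaD D s' := by
  have h1 : IsPrefixOf (deltaD D s) (D (extB s')) :=
    deltaD_isPrefixOf (IsPrefixOf.mono h (isPrefixOf_extB s'))
  have h2 : IsPrefixOf (deltaD D s') (D (extB s')) := deltaD_isPrefixOf (isPrefixOf_extB s')
  exact isPrefixOf_prefix h1 h2 (by simpa using muD_mono (D := D) h)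

lemma muD_unbounded {D : Baire → Baire} (hD : Continuous D) (q : Baire) (m : ℕ) :
    ∃ n, m ≤ muD D (histN q n) := by
  obtain ⟨N, hN⟩ := continuous_modulus hD q m
  refine ⟨max N m, ?_⟩
  have hst : StableD D (histN q (max N m)) m := by
    have hext : ∀ q', IsPrefixOf (histN q (max N m)) q' → ∀ j < m, D q' j = D q j := by
      intro q' hq' j hj
      refine hN q' (fun i hi => ?_) j hj
      have hi' : i < max N m := by omega
      exact (hq'.apply_eq (by simpa using hi')).trans (histN_getElem q hi')
    intro q' hq' j hj
    exact (hext q' hq' j hj).trans (hext (extB _) (isPrefixOf_extB _) j hj).symm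
  exact muD_ge (by simp) hst

/-- The first `n` values of the code constructed by Player I against `ys`. -/
noncomputable def SQ (D : Baire → Baire) (ys : ℕ → List ℕ) : ℕ → List ℕ
  | 0 => []
  | n + 1 => SQ D ys n ++
      [cpair (Encodable.encode (deltaD D (SQ D ys n))) (Encodable.encode (concatN ys (n + 1)))]

/-- The full code constructed by Player I against `ys`. -/
noncomputable def qlim (D : Baire → Baire) (ys : ℕ → List ℕ) : Baire := fun i =>
  cpair (Encodable.encode (deltaD D (SQ D ys i))) (Encodable.encode (concatN ys (i + 1)))

lemma SQ_eq_histN (D : Baire → Baire) (ys : ℕ → List ℕ) (n : ℕ) :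
    SQ D ys n = histN (qlim D ys) n := by
  induction n with
  | zero => rfl
  | succ n ih => rw [SQ, histN_succ, ih, qlim, ← ih]

/-- Player I's moves against `ys`. -/
noncomputable def xmove (D : Baire → Baire) (ys : ℕ → List ℕ) : ℕ → List ℕ
  | 0 => deltaD D (SQ D ys 0)
  | n + 1 => (deltaD D (SQ D ys (n + 1))).drop (deltaD D (SQ D ys n)).length

lemma SQ_congr {D : Baire → Baire} {ys ys' : ℕ → List ℕ} {n : ℕ}
    (h : ∀ i < n, ys i = ys' i) : SQ D ys n = SQ D ys' n := by
  induction n with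
  | zero => rfl
  | succ n ih =>
    have h1 : SQ D ys n = SQ D ys' n := ih (fun i hi => h i (by omega))
    rw [SQ, SQ, h1, concatN_congr (fun i hi => h i (by omega))]

lemma xmove_congr {D : Baire → Baire} {ys ys' : ℕ → List ℕ} {n : ℕ}
    (h : ∀ i < n, ys i = ys' i) : xmove D ys n = xmove D ys' n := by
  cases n with
  | zero => rfl
  | succ n =>
    rw [xmove, xmove, SQ_congr h, SQ_congr (fun i hi => h i (by omega))]

lemma concatN_xmove (D : Baire → Baire) (ys : ℕ → List ℕ) (n : ℕ) :
    concatN (xmove D ys) (n + 1) = deltaD D (SQ D ys n) := by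
  induction n with
  | zero =>
    rw [concatN_succ, concatN_zero, List.nil_append, xmove]
  | succ n ih =>
    rw [concatN_succ, ih, xmove]
    have hpre : SQ D ys n <+: SQ D ys (n + 1) := by
      rw [SQ_eq_histN, SQ_eq_histN]; exact histN_prefix (by omega)
    obtain ⟨t, ht⟩ := deltaD_mono (D := D) hpre
    rw [← ht, List.drop_left]

/-- Player I's strategy from a discontinuity function. -/
noncomputable def sigmaI (D : Baire → Baire) (σh : List (List ℕ)) : List ℕ :=
  xmove D (fun i => σh.getD i []) σh.length

lemma histW_getD (ys : ℕ → List ℕ) {n i : ℕ} (h : i < n) : (histW ys n).getD i [] = ys i := by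
  rw [List.getD_eq_getElem _ _ (by simpa [histW] using h)]
  simp [histW]

lemma sigmaI_histW (D : Baire → Baire) (ys : ℕ → List ℕ) (n : ℕ) :
    sigmaI D (histW ys n) = xmove D ys n := by
  unfold sigmaI
  rw [show (histW ys n).length = n by simp [histW]]
  exact xmove_congr (fun i hi => histW_getD ys hi)

end Aux3
section Forward

lemma forward_dir {f : Problem} (h : EffectivelyDiscontinuous f) :
    ∃ σ : List (List ℕ) → List ℕ, WadgeWinningI f σ := by
  obtain ⟨D, hcont, hdisc⟩ := h
  refine ⟨sigmaI D, fun ys => ?_⟩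
  set xs : ℕ → List ℕ := fun i => sigmaI D (histW ys i) with hxs
  have hxm : ∀ i, xs i = xmove D ys i := fun i => sigmaI_histW D ys i
  set q := qlim D ys with hq
  have hc1 : ∀ n, concatN xs (n + 1) = deltaD D (SQ D ys n) := fun n =>
    (concatN_congr (fun i _ => hxm i)).trans (concatN_xmove D ys n)
  have hSQ : ∀ n, IsPrefixOf (SQ D ys n) q := fun n =>
    (SQ_eq_histN D ys n) ▸ isPrefixOf_histN q n
  have hpre : ∀ n, IsPrefixOf (concatN xs n) (D q) := by
    intro n
    cases n with
    | zero => simp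
    | succ n => rw [hc1 n]; exact deltaD_isPrefixOf (hSQ n)
  have hinf : PlayInf xs := by
    intro m
    obtain ⟨n, hn⟩ := muD_unbounded hcont q (m + 1)
    refine ⟨n + 1, ?_⟩
    rw [hc1 n, deltaD_length, SQ_eq_histN, ← hq]
    omega
  have hx : playLim xs = D q := playLim_unique hinf hpre
  intro hwin
  have hne : (f (D q)).Nonempty := (hdisc q).1
  obtain ⟨hysinf, hysmem⟩ := hwin ⟨hinf, by rw [hx]; exact hne⟩
  have hqn : ∀ i, wn q i = deltaD D (SQ D ys i) := fun i => wn_eq rfl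
  have hqk : ∀ i, wk q i = concatN ys (i + 1) := fun i => wk_eq rfl
  have hcons : ConsistentCode q := by
    intro i j _
    rw [hqk, hqk]
    rcases Nat.le_total i j with hij | hij
    · exact Or.inl (concatN_prefix ys (by omega))
    · exact Or.inr (concatN_prefix ys (by omega))
  have hdom : (Phi q (D q)).Dom := by
    refine ⟨hcons, fun m => ?_⟩
    obtain ⟨n, hn⟩ := hysinf m
    cases n with
    | zero => simp at hn
    | succ n =>
      refine ⟨n, ?_, ?_⟩
      · rw [hqn]; exact deltaD_isPrefixOf (hSQ n)
      · rw [hqk]; exact hn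
  have hget : (Phi q (D q)).get hdom = playLim ys := by
    apply Phi_get_eq hdom
    intro i _
    rw [hqk]
    exact playLim_spec ys (i + 1)
  have hmem : playLim ys ∈ Phi q (D q) := Part.mem_mk_iff.2 ⟨hdom, hget⟩
  exact (hdisc q).2 (playLim ys) hmem (hx ▸ hysmem)

end Forward
noncomputable section Aux5

open List

/-! ### The output committed by a code `q` on a finite input `u` -/

/-- The longest committed output among the first `n` entries of `q` on input `u`. -/
noncomputable def OutN (q : Baire) (u : List ℕ) : ℕ → List ℕ
  | 0 => []
  | n + 1 => if wn q n <+: u ∧ (OutN q u n).length < (wk q n).length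
      then wk q n else OutN q u n

/-- The longest committed output of `q` on input `u`. -/
noncomputable def OutW (q : Baire) (u : List ℕ) : List ℕ := OutN q u u.length

lemma OutN_length_mono (q : Baire) (u : List ℕ) {n m : ℕ} (h : n ≤ m) :
    (OutN q u n).length ≤ (OutN q u m).length := by
  induction m with
  | zero => have : n = 0 := by omega
            subst this; exact le_refl _
  | succ m ih =>
    rcases Nat.lt_or_ge n (m + 1) with h' | h'
    · refine le_trans (ih (by omega)) ?_
      rw [OutN]
      split
      · omega
      · exact le_refl _
    · have : n = m + 1 := by omega
      subst this; exact le_refl _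

lemma OutN_cases (q : Baire) (u : List ℕ) (n : ℕ) :
    OutN q u n = [] ∨ ∃ i < n, wn q i <+: u ∧ OutN q u n = wk q i := by
  induction n with
  | zero => exact Or.inl rfl
  | succ n ih =>
    rw [OutN]
    split
    · next hcond => exact Or.inr ⟨n, by omega, hcond.1, rfl⟩
    · rcases ih with h | ⟨i, hi, h1, h2⟩
      · exact Or.inl h
      · exact Or.inr ⟨i, by omega, h1, h2⟩

lemma OutN_ge (q : Baire) (u : List ℕ) {n i : ℕ} (hi : i < n) (hpre : wn q i <+: u) :
    (wk q i).length ≤ (OutN q u n).length := by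
  induction n with
  | zero => omega
  | succ n ih =>
    rcases Nat.lt_or_ge i n with h' | h'
    · exact le_trans (ih h') (OutN_length_mono q u (by omega))
    · have : i = n := by omega
      subst this
      rw [OutN]
      split
      · exact le_refl _
      · next hcond =>
        rcases Nat.lt_or_ge (OutN q u i).length (wk q i).length with h | h
        · exact absurd ⟨hpre, h⟩ hcond
        · exact h

lemma OutW_ge {q : Baire} {u : List ℕ} {i : ℕ} (hi : i < u.length) (hpre : wn q i <+: u) :
    (wk q i).length ≤ (OutW q u).length := OutN_ge q u hi hpre

lemma prefix_of_comparable {a b : List ℕ} (h : WordComparable a b)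
    (hle : a.length ≤ b.length) : a <+: b := by
  rcases h with h | h
  · exact h
  · have : b = a := List.IsPrefix.eq_of_length h (le_antisymm h.length_le hle)
    rw [this]

lemma wk_prefix_OutW {q : Baire} {u : List ℕ} {i : ℕ} (hcons : ConsistentCode q)
    (hi : i < u.length) (hpre : wn q i <+: u) : wk q i <+: OutW q u := by
  rcases OutN_cases q u u.length with h0 | ⟨j, hj, hj1, hj2⟩
  · have h1 : (wk q i).length ≤ (OutW q u).length := OutW_ge hi hpre
    rw [show OutW q u = OutN q u u.length from rfl, h0] at h1 ⊢
    simp at h1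
    simp [h1]
  · have hcomp : WordComparable (wn q i) (wn q j) :=
      List.prefix_or_prefix_of_prefix hpre hj1
    have hwk : WordComparable (wk q i) (wk q j) := hcons i j hcomp
    have hle : (wk q i).length ≤ (wk q j).length := by
      have := OutW_ge hi hpre
      rw [show OutW q u = OutN q u u.length from rfl, hj2] at this
      exact this
    rw [show OutW q u = OutN q u u.length from rfl, hj2]
    exact prefix_of_comparable hwk hle

lemma OutW_mono {q : Baire} {u u' : List ℕ} (hcons : ConsistentCode q) (h : u <+: u') :
    OutW q u <+: OutW q u' := by
  rcases OutN_cases q u u.length with h0 | ⟨i, hi, h1, h2⟩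
  · rw [show OutW q u = OutN q u u.length from rfl, h0]
    exact List.nil_prefix
  · rw [show OutW q u = OutN q u u.length from rfl, h2]
    exact wk_prefix_OutW hcons (lt_of_lt_of_le hi h.length_le) (h1.trans h)

lemma OutN_congr {q q' : Baire} {u : List ℕ} {n : ℕ}
    (h : ∀ i < n, q' i = q i) : OutN q' u n = OutN q u n := by
  induction n with
  | zero => rfl
  | succ n ih =>
    have h1 : OutN q' u n = OutN q u n := ih (fun i hi => h i (by omega))
    have h2 : wn q' n = wn q n := by unfold wn; rw [h n (by omega)]
    have h3 : wk q' n = wk q n := by unfold wk; rw [h n (by omega)]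
    rw [OutN, OutN, h1, h2, h3]

lemma OutW_congr {q q' : Baire} {u : List ℕ}
    (h : ∀ i < u.length, q' i = q i) : OutW q' u = OutW q u := OutN_congr h

end Aux5
noncomputable section Aux6

open List

/-- I's concatenated play reconstructed from II's history `h` (first `k` moves). -/
def uOf (σ : List (List ℕ) → List ℕ) (h : List (List ℕ)) (k : ℕ) : List ℕ :=
  ((List.range k).map (fun i => σ (h.take i))).flatten

/-- II's next move simulating `Φ_q` against the strategy `σ`. -/
noncomputable def stepII (σ : List (List ℕ) → List ℕ) (q : Baire)
    (h : List (List ℕ)) : List ℕ :=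
  (OutW q (uOf σ h (h.length + 1))).drop (OutW q (uOf σ h h.length)).length

/-- II's history of moves in the run against `σ` simulating `Φ_q`. -/
noncomputable def IIhist (σ : List (List ℕ) → List ℕ) (q : Baire) : ℕ → List (List ℕ)
  | 0 => []
  | n + 1 => IIhist σ q n ++ [stepII σ q (IIhist σ q n)]

/-- II's moves in the run against `σ` simulating `Φ_q`. -/
noncomputable def ysD (σ : List (List ℕ) → List ℕ) (q : Baire) (n : ℕ) : List ℕ :=
  stepII σ q (IIhist σ q n)

/-- I's moves in the run against II simulating `Φ_q`. -/
noncomputable def xsD (σ : List (List ℕ) → List ℕ) (q : Baire) : ℕ → List ℕ :=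
  fun n => σ (histW (ysD σ q) n)

/-- The discontinuity function extracted from the strategy `σ`. -/
noncomputable def Dfun (σ : List (List ℕ) → List ℕ) (q : Baire) : Baire :=
  playLim (xsD σ q)

lemma histW_succ (ys : ℕ → List ℕ) (n : ℕ) :
    histW ys (n + 1) = histW ys n ++ [ys n] := by simp [histW, List.range_succ]

@[simp] lemma histW_length (ys : ℕ → List ℕ) (n : ℕ) : (histW ys n).length = n := by
  simp [histW]

lemma histW_take (ys : ℕ → List ℕ) {i n : ℕ} (h : i ≤ n) :
    (histW ys n).take i = histW ys i := by
  simp [histW, ← List.map_take, List.take_range, Nat.min_eq_left h]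

lemma IIhist_eq (σ : List (List ℕ) → List ℕ) (q : Baire) (n : ℕ) :
    IIhist σ q n = histW (ysD σ q) n := by
  induction n with
  | zero => rfl
  | succ n ih => rw [IIhist, histW_succ, ih, ysD, ← ih]

@[simp] lemma IIhist_length (σ : List (List ℕ) → List ℕ) (q : Baire) (n : ℕ) :
    (IIhist σ q n).length = n := by rw [IIhist_eq]; simp

lemma IIhist_take (σ : List (List ℕ) → List ℕ) (q : Baire) {i n : ℕ} (h : i ≤ n) :
    (IIhist σ q n).take i = IIhist σ q i := by
  rw [IIhist_eq, IIhist_eq, histW_take _ h]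

lemma uOf_IIhist (σ : List (List ℕ) → List ℕ) (q : Baire) {k n : ℕ} (h : k ≤ n + 1) :
    uOf σ (IIhist σ q n) k = concatN (xsD σ q) k := by
  unfold uOf concatN
  congr 1
  apply List.map_congr_left
  intro i hi
  have hi' : i ≤ n := by simp at hi; omega
  rw [IIhist_take σ q hi', IIhist_eq]
  rfl

lemma ysD_eq (σ : List (List ℕ) → List ℕ) (q : Baire) (n : ℕ) :
    ysD σ q n = (OutW q (concatN (xsD σ q) (n + 1))).drop
      (OutW q (concatN (xsD σ q) n)).length := by
  unfold ysD stepII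
  rw [IIhist_length, uOf_IIhist σ q (le_refl (n + 1)), uOf_IIhist σ q (by omega : n ≤ n + 1)]

lemma prefix_append_drop {l l' : List ℕ} (h : l <+: l') : l ++ l'.drop l.length = l' := by
  obtain ⟨t, rfl⟩ := h
  rw [List.drop_left]

lemma concat_ysD (σ : List (List ℕ) → List ℕ) {q : Baire} (hcons : ConsistentCode q)
    (n : ℕ) : concatN (ysD σ q) n = OutW q (concatN (xsD σ q) n) := by
  induction n with
  | zero => rfl
  | succ n ih =>
    rw [concatN_succ, ih, ysD_eq]
    exact prefix_append_drop (OutW_mono hcons (concatN_prefix _ (by omega)))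

lemma IIhist_congr (σ : List (List ℕ) → List ℕ) (q : Baire) (n : ℕ) :
    ∃ N, ∀ q', (∀ i < N, q' i = q i) → IIhist σ q' n = IIhist σ q n := by
  induction n with
  | zero => exact ⟨0, fun _ _ => rfl⟩
  | succ n ih =>
    obtain ⟨N, hN⟩ := ih
    refine ⟨max N (uOf σ (IIhist σ q n) (n + 1)).length, fun q' hq' => ?_⟩
    have h1 : IIhist σ q' n = IIhist σ q n := hN q' (fun i hi => hq' i (by omega))
    rw [IIhist, IIhist, h1]
    congr 1
    unfold stepII
    simp only [IIhist_length]
    have hlen : (uOf σ (IIhist σ q n) n).length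
        ≤ (uOf σ (IIhist σ q n) (n + 1)).length := by
      apply List.IsPrefix.length_le
      unfold uOf
      rw [List.range_succ, List.map_append, List.flatten_append]
      exact List.prefix_append _ _
    rw [OutW_congr (fun i hi => hq' i (by omega)),
        OutW_congr (fun i hi => hq' i (by omega))]

end Aux6
section Backward

lemma backward_dir {f : Problem} (h : ∃ σ : List (List ℕ) → List ℕ, WadgeWinningI f σ) :
    EffectivelyDiscontinuous f := by
  obtain ⟨σ, hσ⟩ := h
  have hrun : ∀ q, PlayInf (xsD σ q) ∧ (f (playLim (xsD σ q))).Nonempty ∧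
      ¬(PlayInf (ysD σ q) ∧ playLim (ysD σ q) ∈ f (playLim (xsD σ q))) := by
    intro q
    have h2 : ¬ ((PlayInf (xsD σ q) ∧ (f (playLim (xsD σ q))).Nonempty) →
        (PlayInf (ysD σ q) ∧ playLim (ysD σ q) ∈ f (playLim (xsD σ q)))) := hσ (ysD σ q)
    rw [Classical.not_imp] at h2
    exact ⟨h2.1.1, h2.1.2, h2.2⟩
  have hcont : Continuous (Dfun σ) := by
    apply continuous_of_locally_determined
    intro q m
    obtain ⟨n, hn⟩ := (hrun q).1 m
    obtain ⟨N, hN⟩ := IIhist_congr σ q n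
    refine ⟨N, fun q' hq' => ?_⟩
    have hh : IIhist σ q' n = IIhist σ q n := hN q' hq'
    have hxs : ∀ i < n, xsD σ q' i = xsD σ q i := by
      intro i hi
      show σ (histW (ysD σ q') i) = σ (histW (ysD σ q) i)
      rw [← IIhist_eq, ← IIhist_eq, ← IIhist_take σ q' (le_of_lt hi),
        ← IIhist_take σ q (le_of_lt hi), hh]
    have hcc : concatN (xsD σ q') n = concatN (xsD σ q) n := concatN_congr hxs
    have h1 : IsPrefixOf (concatN (xsD σ q) n) (playLim (xsD σ q)) := playLim_spec _ n
    have h2 : IsPrefixOf (concatN (xsD σ q') n) (playLim (xsD σ q')) := playLim_spec _ n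
    show playLim (xsD σ q') m = playLim (xsD σ q) m
    have hn' : m < (concatN (xsD σ q') n).length := by rw [hcc]; exact hn
    rw [h2.apply_eq hn', h1.apply_eq hn]
    exact List.getElem_of_eq hcc hn'
  refine ⟨Dfun σ, hcont, fun q => ⟨(hrun q).2.1, ?_⟩⟩
  intro y hy hyf
  obtain ⟨hdom, hget⟩ := Phi_mem_elim hy
  have hcons : ConsistentCode q := hdom.1
  have hub := hdom.2
  have hxinf := (hrun q).1
  have hcys : ∀ n, concatN (ysD σ q) n = OutW q (concatN (xsD σ q) n) := concat_ysD σ hcons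
  have key : ∀ i, IsPrefixOf (wn q i) (playLim (xsD σ q)) →
      ∃ n, wn q i <+: concatN (xsD σ q) n ∧ i < (concatN (xsD σ q) n).length := by
    intro i hi
    obtain ⟨n, hn⟩ := hxinf (max i (wn q i).length)
    exact ⟨n, isPrefixOf_prefix hi (playLim_spec _ n) (by omega), by omega⟩
  have hyinf : PlayInf (ysD σ q) := by
    intro m
    obtain ⟨i, hi1, hi2⟩ := hub m
    obtain ⟨n, hn1, hn2⟩ := key i hi1
    refine ⟨n, ?_⟩
    rw [hcys n]
    have := OutW_ge hn2 hn1
    omega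
  have hpref : ∀ i, IsPrefixOf (wn q i) (playLim (xsD σ q)) →
      IsPrefixOf (wk q i) (playLim (ysD σ q)) := by
    intro i hi
    obtain ⟨n, hn1, hn2⟩ := key i hi
    have h1 : wk q i <+: OutW q (concatN (xsD σ q) n) := wk_prefix_OutW hcons hn2 hn1
    rw [← hcys n] at h1
    exact IsPrefixOf.mono h1 (playLim_spec _ n)
  have hyval : y = playLim (ysD σ q) := by rw [← hget]; exact Phi_get_eq hdom hpref
  exact (hrun q).2.2 ⟨hyinf, hyval ▸ hyf⟩

end Backward

/-- `f` is effectively discontinuous iff Player I has a winning strategy in the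
Wadge game of `f`. -/
theorem effectively_discontinuous_iff_wadge_winning_I (f : Problem) :
    EffectivelyDiscontinuous f ↔ ∃ σ : List (List ℕ) → List ℕ, WadgeWinningI f σ :=
  ⟨forward_dir, backward_dir⟩
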